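/- Let M be the n×n tridiagonal matrix with diagonal entries 2x_1, ..., 2x_n (each 2x_i ≥ 3, i.e. x_i ≥ 2) and off-diagonal entries -1, and suppose x_i ≠ x_{n+1-i} for some i. If A is an integer matrix with A M A^T = M, then trace(A) ≠ -1. (Indeed A = ±Id, so trace(A) = ±n.) -/

import Mathlib

open Matrix Finset

def padf (n : ℕ) (v : Fin n → ℤ) (k : ℕ) : ℤ :=
  if h : 0 < k ∧ k ≤ n then v ⟨k - 1, by omega⟩ else 0

lemma padf_zero (n : ℕ) (v : Fin n → ℤ) : padf n v 0 = 0 := by simp [padf]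

lemma padf_top (n : ℕ) (v : Fin n → ℤ) {k : ℕ} (h : n < k) : padf n v k = 0 := by
  simp only [padf]; rw [dif_neg]; omega

lemma padf_succ (n : ℕ) (v : Fin n → ℤ) {k : ℕ} (h : k < n) :
    padf n v (k + 1) = v ⟨k, h⟩ := by
  simp only [padf]; rw [dif_pos ⟨by omega, by omega⟩]; congr 1

lemma padf_coe (n : ℕ) (v : Fin n → ℤ) (i : Fin n) : padf n v (↑i + 1) = v i := by
  rw [padf_succ n v i.isLt]

lemma tele_sq (u : ℕ → ℤ) (n : ℕ) (h0 : u 0 = 0) (hn : u (n + 1) = 0) :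
    ∑ k ∈ Finset.range (n + 1), (u (k + 1) - u k) ^ 2
      = ∑ k ∈ Finset.range n,
          (2 * (u (k + 1)) ^ 2 - u (k + 1) * u k - u (k + 1) * u (k + 2)) := by
  have e1 : ∑ k ∈ Finset.range (n + 1), (u (k + 1) - u k) ^ 2
      = (∑ k ∈ Finset.range (n + 1), ((u (k + 1)) ^ 2 - u k * u (k + 1)))
        + ∑ k ∈ Finset.range (n + 1), ((u k) ^ 2 - u k * u (k + 1)) := by
    rw [← Finset.sum_add_distrib]
    exact Finset.sum_congr rfl fun k _ => by ring
  have e2 : ∑ k ∈ Finset.range (n + 1), ((u (k + 1)) ^ 2 - u k * u (k + 1))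
      = ∑ k ∈ Finset.range n, ((u (k + 1)) ^ 2 - u k * u (k + 1)) := by
    rw [Finset.sum_range_succ, hn]; ring
  have e3 : ∑ k ∈ Finset.range (n + 1), ((u k) ^ 2 - u k * u (k + 1))
      = ∑ k ∈ Finset.range n, ((u (k + 1)) ^ 2 - u (k + 1) * u (k + 2)) := by
    rw [Finset.sum_range_succ' (fun k => (u k) ^ 2 - u k * u (k + 1)) n, h0]
    ring
  rw [e1, e2, e3, ← Finset.sum_add_distrib]
  exact Finset.sum_congr rfl fun k _ => by ring

theorem stmt9 (n : ℕ) (hn : 2 ≤ n) (x : Fin n → ℤ) (hx : ∀ i, 2 ≤ x i)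
    (M : Matrix (Fin n) (Fin n) ℤ)
    (hM : ∀ i j, M i j =
      if i = j then 2 * x i
      else if (i : ℕ) + 1 = (j : ℕ) ∨ (j : ℕ) + 1 = (i : ℕ) then -1 else 0)
    (hnonpal : ∃ i : Fin n, x i ≠ x i.rev) :
    ∀ A : Matrix (Fin n) (Fin n) ℤ, A * M * Aᵀ = M → A.trace ≠ -1 := by
  classical
  intro A hA htr
  have hrowsum : ∀ (v : Fin n → ℤ) (l : Fin n),
      ∑ k, v k * M k l = 2 * x l * v l - padf n v ↑l - padf n v (↑l + 2) := by
    intro v l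
    have hsplit : ∀ k : Fin n, v k * M k l
        = (if k = l then 2 * x l * v l else 0)
          + ((if (↑k : ℕ) + 1 = ↑l then -v k else 0)
            + (if (↑l : ℕ) + 1 = ↑k then -v k else 0)) := by
      intro k
      rw [hM]
      rcases eq_or_ne k l with rfl | hkl
      · simp; ring
      · have h1 : ¬ (k = l) := hkl
        simp only [if_neg h1]
        by_cases h2 : (↑k : ℕ) + 1 = ↑l
        · have h3 : ¬ ((↑l : ℕ) + 1 = ↑k) := by omega
          simp only [if_pos (Or.inl h2 : (↑k : ℕ) + 1 = ↑l ∨ (↑l : ℕ) + 1 = ↑k),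
            if_pos h2, if_neg h3]; ring
        · by_cases h4 : (↑l : ℕ) + 1 = ↑k
          · simp only [if_pos (Or.inr h4 : (↑k : ℕ) + 1 = ↑l ∨ (↑l : ℕ) + 1 = ↑k),
              if_neg h2, if_pos h4]; ring
          · simp only [if_neg (show ¬((↑k : ℕ) + 1 = ↑l ∨ (↑l : ℕ) + 1 = ↑k) by tauto),
              if_neg h2, if_neg h4]; ring
    rw [Finset.sum_congr rfl (fun k _ => hsplit k), Finset.sum_add_distrib,
      Finset.sum_add_distrib]
    have s0 : ∑ k : Fin n, (if k = l then 2 * x l * v l else 0) = 2 * x l * v l := by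
      simp
    have s1 : ∑ k : Fin n, (if (↑k : ℕ) + 1 = ↑l then -v k else 0) = -padf n v ↑l := by
      by_cases hl : (↑l : ℕ) = 0
      · rw [Finset.sum_eq_zero, hl, padf_zero]
        · ring
        · intro k _; rw [if_neg (by omega)]
      · have hlt : (↑l : ℕ) - 1 < n := by omega
        rw [Finset.sum_eq_single (⟨↑l - 1, hlt⟩ : Fin n)]
        · rw [if_pos (by simp; omega)]
          have h5 : padf n v ↑l = v ⟨↑l - 1, hlt⟩ := by
            have h6 := padf_succ n v hlt
            rw [show (↑l : ℕ) - 1 + 1 = ↑l by omega] at h6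
            exact h6
          rw [h5]
        · intro b _ hb
          rw [if_neg]
          intro hc
          exact hb (by apply Fin.ext; simp; omega)
        · intro h; exact absurd (Finset.mem_univ _) h
    have s2 : ∑ k : Fin n, (if (↑l : ℕ) + 1 = ↑k then -v k else 0)
        = -padf n v (↑l + 2) := by
      by_cases hl : (↑l : ℕ) + 1 < n
      · rw [Finset.sum_eq_single (⟨↑l + 1, hl⟩ : Fin n)]
        · rw [if_pos (by simp)]
          rw [show (↑l : ℕ) + 2 = (↑l + 1) + 1 by omega, padf_succ n v hl]
        · intro b _ hb
          rw [if_neg]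
          intro hc
          exact hb (by apply Fin.ext; simp; omega)
        · intro h; exact absurd (Finset.mem_univ _) h
      · rw [Finset.sum_eq_zero, padf_top n v (by omega)]
        · ring
        · intro k _; rw [if_neg (by have := k.isLt; omega)]
    rw [s0, s1, s2]; ring
  set X : ℕ → ℤ := fun k => if h : k < n then x ⟨k, h⟩ else 2 with hXdef
  have hX2 : ∀ k, 2 ≤ X k := by
    intro k
    by_cases h : k < n
    · simpa [hXdef, dif_pos h] using hx ⟨k, h⟩
    · simp [hXdef, dif_neg h]
  have hXc : ∀ l : Fin n, X ↑l = x l := by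
    intro l
    simp [hXdef, dif_pos l.isLt]
  set Qv : (Fin n → ℤ) → ℤ := fun v => ∑ l, (∑ k, v k * M k l) * v l with hQvdef
  have hQid : ∀ v, Qv v
      = (∑ k ∈ Finset.range n, (2 * X k - 2) * (padf n v (k + 1)) ^ 2)
        + ∑ k ∈ Finset.range (n + 1), (padf n v (k + 1) - padf n v k) ^ 2 := by
    intro v
    have h1 : ∀ l : Fin n, (∑ k, v k * M k l) * v l
        = (2 * X ↑l * padf n v (↑l + 1) - padf n v ↑l - padf n v (↑l + 2))
            * padf n v (↑l + 1) := by
      intro l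
      rw [hrowsum v l, padf_coe, hXc l]
    calc Qv v = ∑ l : Fin n, (2 * X ↑l * padf n v (↑l + 1) - padf n v ↑l
          - padf n v (↑l + 2)) * padf n v (↑l + 1) :=
        Finset.sum_congr rfl fun l _ => h1 l
      _ = ∑ m ∈ Finset.range n, (2 * X m * padf n v (m + 1) - padf n v m
          - padf n v (m + 2)) * padf n v (m + 1) :=
        Fin.sum_univ_eq_sum_range (fun m => (2 * X m * padf n v (m + 1) - padf n v m
          - padf n v (m + 2)) * padf n v (m + 1)) n
      _ = (∑ k ∈ Finset.range n, (2 * X k - 2) * (padf n v (k + 1)) ^ 2)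
          + ∑ k ∈ Finset.range (n + 1), (padf n v (k + 1) - padf n v k) ^ 2 := by
        rw [tele_sq (padf n v) n (padf_zero n v) (padf_top n v (by omega)),
          ← Finset.sum_add_distrib]
        exact Finset.sum_congr rfl fun k _ => by ring
  have hsq1 : ∀ t : ℤ, t ≠ 0 → 1 ≤ t ^ 2 := by
    intro t ht
    rcases lt_or_gt_of_ne ht with h | h <;> nlinarith
  have hTnonneg : ∀ v : Fin n → ℤ, ∀ k ∈ Finset.range n,
      (0:ℤ) ≤ (2 * X k - 2) * (padf n v (k + 1)) ^ 2 := by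
    intro v k _
    exact mul_nonneg (by have := hX2 k; omega) (sq_nonneg _)
  have hE2 : ∀ (v : Fin n → ℤ) (j : Fin n), v j ≠ 0 →
      2 ≤ ∑ k ∈ Finset.range (n + 1), (padf n v (k + 1) - padf n v k) ^ 2 := by
    intro v j hj
    set S : Finset (Fin n) := Finset.univ.filter (fun i => v i ≠ 0) with hS
    have hjS : j ∈ S := by simp [hS, hj]
    have hne : S.Nonempty := ⟨j, hjS⟩
    set a := S.min' hne with ha
    set b := S.max' hne with hb
    have haS : a ∈ S := S.min'_mem hne
    have hbS : b ∈ S := S.max'_mem hne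
    have hva : v a ≠ 0 := by simpa [hS] using haS
    have hvb : v b ≠ 0 := by simpa [hS] using hbS
    have hab : (↑a : ℕ) ≤ ↑b := S.min'_le b hbS
    have hta : (padf n v (↑a + 1) - padf n v ↑a) ^ 2 = (v a) ^ 2 := by
      rw [padf_coe]
      have hz : padf n v ↑a = 0 := by
        rcases Nat.eq_zero_or_pos ↑a with h0 | h0
        · rw [h0, padf_zero]
        · have hlt : (↑a : ℕ) - 1 < n := by have := a.isLt; omega
          rw [show (↑a : ℕ) = ((↑a : ℕ) - 1) + 1 by omega, padf_succ n v hlt]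
          by_contra hzz
          have hmem : (⟨↑a - 1, hlt⟩ : Fin n) ∈ S :=
            Finset.mem_filter.mpr ⟨Finset.mem_univ _, hzz⟩
          have h5 : a ≤ (⟨↑a - 1, hlt⟩ : Fin n) := S.min'_le _ hmem
          have h6 : (↑a : ℕ) ≤ ↑a - 1 := h5
          omega
      rw [hz]; ring
    have htb : (padf n v ((↑b + 1) + 1) - padf n v (↑b + 1)) ^ 2 = (v b) ^ 2 := by
      rw [padf_coe]
      have hz : padf n v ((↑b : ℕ) + 1 + 1) = 0 := by
        by_cases hlt : (↑b : ℕ) + 1 < n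
        · rw [padf_succ n v hlt]
          by_contra hzz
          have hmem : (⟨↑b + 1, hlt⟩ : Fin n) ∈ S :=
            Finset.mem_filter.mpr ⟨Finset.mem_univ _, hzz⟩
          have h5 : (⟨↑b + 1, hlt⟩ : Fin n) ≤ b := S.le_max' _ hmem
          have h6 : (↑b : ℕ) + 1 ≤ ↑b := h5
          omega
        · exact padf_top n v (by omega)
      rw [hz]; ring
    have hpair : ({(↑a : ℕ), (↑b : ℕ) + 1} : Finset ℕ) ⊆ Finset.range (n + 1) := by
      intro t ht
      simp only [Finset.mem_insert, Finset.mem_singleton] at ht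
      rcases ht with rfl | rfl
      · simp only [Finset.mem_range]; have := a.isLt; omega
      · simp only [Finset.mem_range]; have := b.isLt; omega
    have hineq := Finset.sum_le_sum_of_subset_of_nonneg hpair
      (fun k _ _ => sq_nonneg (padf n v (k + 1) - padf n v k))
    rw [Finset.sum_pair (show (↑a : ℕ) ≠ (↑b : ℕ) + 1 by omega)] at hineq
    rw [hta, htb] at hineq
    have h1 := hsq1 _ hva
    have h2 := hsq1 _ hvb
    linarith
  have hQlow : ∀ (v : Fin n → ℤ) (j : Fin n), v j ≠ 0 → 2 * x j ≤ Qv v := by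
    intro v j hj
    rw [hQid v]
    have h1 : (2 * X ↑j - 2) * (padf n v (↑j + 1)) ^ 2
        ≤ ∑ k ∈ Finset.range n, (2 * X k - 2) * (padf n v (k + 1)) ^ 2 :=
      Finset.single_le_sum (hTnonneg v) (by simp [j.isLt])
    rw [padf_coe, hXc j] at h1
    have h2 := hE2 v j hj
    have h3 : 2 * x j - 2 ≤ (2 * x j - 2) * (v j) ^ 2 := by
      nlinarith [hsq1 _ hj, hx j]
    linarith
  have hQeq : ∀ (v : Fin n → ℤ) (j : Fin n), v j ≠ 0 → Qv v = 2 * x j →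
      (v j = 1 ∨ v j = -1) ∧ ∀ k : Fin n, k ≠ j → v k = 0 := by
    intro v j hj heq
    rw [hQid v] at heq
    have hE := hE2 v j hj
    have h1 : (2 * X ↑j - 2) * (padf n v (↑j + 1)) ^ 2
        ≤ ∑ k ∈ Finset.range n, (2 * X k - 2) * (padf n v (k + 1)) ^ 2 :=
      Finset.single_le_sum (hTnonneg v) (by simp [j.isLt])
    rw [padf_coe, hXc j] at h1
    constructor
    · have hsq : (v j) ^ 2 ≤ 1 := by nlinarith [hx j, hsq1 _ hj]
      have hz : (v j - 1) * (v j + 1) = 0 := by nlinarith [hsq1 _ hj]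
      rcases mul_eq_zero.mp hz with h | h
      · left; linarith
      · right; linarith
    · intro k hk
      by_contra hvk
      have hjk : (↑j : ℕ) ≠ ↑k := fun h => hk (Fin.ext h.symm)
      have hpair : ({(↑j : ℕ), ↑k} : Finset ℕ) ⊆ Finset.range n := by
        intro t ht
        simp only [Finset.mem_insert, Finset.mem_singleton] at ht
        rcases ht with rfl | rfl
        · simp [j.isLt]
        · simp [k.isLt]
      have hineq := Finset.sum_le_sum_of_subset_of_nonneg hpair
        (fun m hm _ => hTnonneg v m hm)
      rw [Finset.sum_pair hjk] at hineq
      rw [padf_coe, padf_coe, hXc j, hXc k] at hineq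
      have h3 : 2 * x j - 2 ≤ (2 * x j - 2) * (v j) ^ 2 := by
        nlinarith [hsq1 _ hj, hx j]
      have h4 : 2 ≤ (2 * x k - 2) * (v k) ^ 2 := by
        nlinarith [hsq1 _ hvk, hx k]
      linarith
  have hMii : ∀ i : Fin n, M i i = 2 * x i := by
    intro i; rw [hM, if_pos rfl]
  have hBil : ∀ C : Matrix (Fin n) (Fin n) ℤ, C * M * Cᵀ = M →
      ∀ i j, ∑ l, (∑ k, C i k * M k l) * C j l = M i j := by
    intro C hC i j
    have h := congrFun (congrFun hC i) j
    simp only [Matrix.mul_apply, Matrix.transpose_apply] at h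
    exact h
  -- determinant of M is nonzero
  have hdetM : M.det ≠ 0 := by
    intro h0
    obtain ⟨v, hv0, hMv⟩ := Matrix.exists_vecMul_eq_zero_iff.mpr h0
    obtain ⟨j, hj⟩ := Function.ne_iff.mp hv0
    have hQ0 : Qv v = 0 := by
      rw [hQvdef]
      refine Finset.sum_eq_zero fun l _ => ?_
      have h1 : (v ᵥ* M) l = 0 := by rw [hMv]; rfl
      have h2 : ∑ k, v k * M k l = 0 := h1
      rw [h2, zero_mul]
    have := hQlow v j hj
    have := hx j
    omega
  -- A is invertible
  have hdetA : A.det * A.det = 1 := by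
    have h1 : (A * M * Aᵀ).det = M.det := by rw [hA]
    rw [Matrix.det_mul, Matrix.det_mul, Matrix.det_transpose] at h1
    have h2 : (A.det * A.det - 1) * M.det = 0 := by linear_combination h1
    rcases mul_eq_zero.mp h2 with h | h
    · linarith
    · exact absurd h hdetM
  have hunit : IsUnit A.det := IsUnit.of_mul_eq_one _ hdetA
  have hAB : A * A⁻¹ = 1 := Matrix.mul_nonsing_inv A hunit
  have hBA : A⁻¹ * A = 1 := Matrix.nonsing_inv_mul A hunit
  have hBis : A⁻¹ * M * A⁻¹ᵀ = M := by
    have h1 : Aᵀ * A⁻¹ᵀ = 1 := by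
      rw [← Matrix.transpose_mul, hBA, Matrix.transpose_one]
    calc A⁻¹ * M * A⁻¹ᵀ = A⁻¹ * (A * M * Aᵀ) * A⁻¹ᵀ := by rw [hA]
      _ = (A⁻¹ * A) * (M * (Aᵀ * A⁻¹ᵀ)) := by simp only [Matrix.mul_assoc]
      _ = M := by rw [hBA, h1, one_mul, Matrix.mul_one]
  -- every row of A is a signed standard basis vector
  have hrow : ∀ i : Fin n, ∃ (j : Fin n) (e : ℤ), (e = 1 ∨ e = -1) ∧ x j = x i ∧
      ∀ k, A i k = if k = j then e else 0 := by
    intro i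
    have hQA : Qv (A i) = 2 * x i := by
      have h := hBil A hA i i; rw [hMii] at h; exact h
    have hone : ∑ k, A i k * A⁻¹ k i = 1 := by
      have h := congrFun (congrFun hAB i) i
      simp only [Matrix.mul_apply, Matrix.one_apply_eq] at h
      exact h
    have hex : ∃ k, A i k * A⁻¹ k i ≠ 0 := by
      by_contra hc; push_neg at hc
      rw [Finset.sum_eq_zero (fun k _ => hc k)] at hone
      exact one_ne_zero hone.symm
    obtain ⟨k, hk⟩ := hex
    have hAik : A i k ≠ 0 := fun h => hk (by rw [h, zero_mul])
    have hBki : A⁻¹ k i ≠ 0 := fun h => hk (by rw [h, mul_zero])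
    have h1 : 2 * x k ≤ 2 * x i := hQA ▸ hQlow (A i) k hAik
    have hQB : Qv (A⁻¹ k) = 2 * x k := by
      have h := hBil A⁻¹ hBis k k; rw [hMii] at h; exact h
    have h2 : 2 * x i ≤ 2 * x k := hQB ▸ hQlow (A⁻¹ k) i hBki
    have hxk : x k = x i := by linarith
    have heq2 : Qv (A i) = 2 * x k := by rw [hQA, hxk]
    obtain ⟨hpm, hzero⟩ := hQeq (A i) k hAik heq2
    refine ⟨k, A i k, hpm, hxk, fun m => ?_⟩
    by_cases hm : m = k
    · subst hm; rw [if_pos rfl]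
    · rw [if_neg hm]; exact hzero m hm
  choose σ eps heps hxs hdelta using hrow
  -- cross relations
  have hAMrow : ∀ (i l : Fin n), ∑ k, A i k * M k l = eps i * M (σ i) l := by
    intro i l
    rw [Finset.sum_congr rfl (fun k _ => by rw [hdelta i k])]
    simp only [ite_mul, zero_mul]
    rw [Finset.sum_ite_eq' Finset.univ (σ i) (fun k => eps i * M k l)]
    simp
  have hcross : ∀ i j : Fin n, eps i * eps j * M (σ i) (σ j) = M i j := by
    intro i j
    have h := hBil A hA i j
    rw [Finset.sum_congr rfl (fun l _ => by rw [hAMrow i l, hdelta j l])] at h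
    rw [Finset.sum_congr rfl (fun l _ =>
      mul_ite (l = σ j) (eps i * M (σ i) l) (eps j) 0)] at h
    simp only [mul_zero] at h
    rw [Finset.sum_ite_eq' Finset.univ (σ j) (fun l => eps i * M (σ i) l * eps j)] at h
    simp only [Finset.mem_univ, if_true] at h
    rw [← h]; ring
  have hsiginj : ∀ i j : Fin n, i ≠ j → σ i ≠ σ j := by
    intro i j hij hss
    have h := hcross i j
    rw [hss, hMii] at h
    have hMoff : M i j = -1 ∨ M i j = 0 := by
      rw [hM, if_neg hij]
      by_cases h2 : (↑i : ℕ) + 1 = ↑j ∨ (↑j : ℕ) + 1 = ↑i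
      · left; rw [if_pos h2]
      · right; rw [if_neg h2]
    have hxj := hx (σ j)
    rcases heps i with e1 | e1 <;> rcases heps j with e2 | e2 <;>
      rw [e1, e2] at h <;> rcases hMoff with h3 | h3 <;> rw [h3] at h <;> nlinarith
  have hadj : ∀ i j : Fin n, (↑i : ℕ) + 1 = ↑j →
      (((↑(σ i) : ℕ) + 1 = ↑(σ j) ∨ (↑(σ j) : ℕ) + 1 = ↑(σ i)) ∧ eps i = eps j) := by
    intro i j hij1
    have hij : i ≠ j := by
      intro h; rw [h] at hij1; omega
    have hMij : M i j = -1 := by rw [hM, if_neg hij, if_pos (Or.inl hij1)]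
    have h := hcross i j
    rw [hMij] at h
    have hss := hsiginj i j hij
    by_cases hadj2 : (↑(σ i) : ℕ) + 1 = ↑(σ j) ∨ (↑(σ j) : ℕ) + 1 = ↑(σ i)
    · refine ⟨hadj2, ?_⟩
      have hMs : M (σ i) (σ j) = -1 := by rw [hM, if_neg hss, if_pos hadj2]
      rw [hMs] at h
      rcases heps i with e1 | e1 <;> rcases heps j with e2 | e2 <;>
        rw [e1, e2] at h ⊢ <;> norm_num at h
    · exfalso
      have hMs : M (σ i) (σ j) = 0 := by rw [hM, if_neg hss, if_neg hadj2]
      rw [hMs, mul_zero] at h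
      norm_num at h
  -- eps is constant
  have hepsconst : ∀ i : Fin n, eps i = eps ⟨0, by omega⟩ := by
    have key : ∀ m : ℕ, ∀ h : m < n, eps ⟨m, h⟩ = eps ⟨0, by omega⟩ := by
      intro m
      induction m with
      | zero => intro h; rfl
      | succ p ih =>
        intro h
        have hp : p < n := by omega
        have h2 := (hadj ⟨p, hp⟩ ⟨p + 1, h⟩ (by simp)).2
        rw [← h2]; exact ih hp
    intro i
    rcases i with ⟨m, hm⟩
    exact key m hm
  -- the path function
  set s : ℕ → ℤ := fun k => if h : k < n then ((σ ⟨k, h⟩ : ℕ) : ℤ) else 0 with hsdef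
  have hsval : ∀ (k : ℕ) (h : k < n), s k = ((σ ⟨k, h⟩ : ℕ) : ℤ) := by
    intro k h; simp [hsdef, dif_pos h]
  have hsbound : ∀ (k : ℕ) (h : k < n), 0 ≤ s k ∧ s k ≤ (n : ℤ) - 1 := by
    intro k h
    rw [hsval k h]
    have := (σ ⟨k, h⟩).isLt
    omega
  have hstep : ∀ k : ℕ, k + 1 < n → s (k + 1) = s k + 1 ∨ s (k + 1) = s k - 1 := by
    intro k h
    have hk : k < n := by omega
    have h2 := (hadj ⟨k, hk⟩ ⟨k + 1, h⟩ (by simp)).1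
    rw [hsval k hk, hsval (k + 1) h]
    rcases h2 with h1 | h1
    · left; omega
    · right; omega
  have hsinj : ∀ (k l : ℕ) (hk : k < n) (hl : l < n), k ≠ l → s k ≠ s l := by
    intro k l hk hl hkl heq
    rw [hsval k hk, hsval l hl] at heq
    have h2 : σ ⟨k, hk⟩ = σ ⟨l, hl⟩ := Fin.ext (by exact_mod_cast heq)
    exact hsiginj ⟨k, hk⟩ ⟨l, hl⟩ (by simp [Fin.ext_iff]; omega) h2
  have hpath : ∀ m : ℕ, m < n →
      (∀ k, k ≤ m → s k = s 0 + k) ∨ (∀ k, k ≤ m → s k = s 0 - k) := by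
    intro m
    induction m with
    | zero =>
      intro _
      left; intro k hk
      have : k = 0 := by omega
      subst this; simp
    | succ p ih =>
      intro h
      have hp : p < n := by omega
      rcases ih hp with hinc | hdec
      · rcases hstep p h with h1 | h1
        · left; intro k hk
          rcases Nat.lt_or_ge k (p + 1) with h2 | h2
          · exact hinc k (by omega)
          · have h3 : k = p + 1 := by omega
            subst h3
            rw [h1, hinc p le_rfl]
            push_cast; ring
        · rcases Nat.eq_zero_or_pos p with rfl | hp0
          · right; intro k hk
            have hk01 : k = 0 ∨ k = 1 := by omega
            rcases hk01 with rfl | rfl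
            · simp
            · rw [h1]; simp
          · exfalso
            have e1 : s (p + 1) = s 0 + p - 1 := by
              rw [h1, hinc p le_rfl]
            have e2 : s (p - 1) = s 0 + ((p : ℤ) - 1) := by
              have := hinc (p - 1) (by omega)
              rw [this]
              have : ((p - 1 : ℕ) : ℤ) = (p : ℤ) - 1 := by omega
              rw [this]
            have e3 : s (p + 1) = s (p - 1) := by rw [e1, e2]; ring
            exact hsinj (p + 1) (p - 1) h (by omega) (by omega) e3
      · rcases hstep p h with h1 | h1
        · rcases Nat.eq_zero_or_pos p with rfl | hp0
          · left; intro k hk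
            have hk01 : k = 0 ∨ k = 1 := by omega
            rcases hk01 with rfl | rfl
            · simp
            · rw [h1]; simp
          · exfalso
            have e1 : s (p + 1) = s 0 - p + 1 := by
              rw [h1, hdec p le_rfl]
            have e2 : s (p - 1) = s 0 - ((p : ℤ) - 1) := by
              have h5 := hdec (p - 1) (by omega)
              rw [h5]
              have h6 : ((p - 1 : ℕ) : ℤ) = (p : ℤ) - 1 := by omega
              rw [h6]
            have e3 : s (p + 1) = s (p - 1) := by rw [e1, e2]; ring
            exact hsinj (p + 1) (p - 1) h (by omega) (by omega) e3
        · right; intro k hk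
          rcases Nat.lt_or_ge k (p + 1) with h2 | h2
          · exact hdec k (by omega)
          · have h3 : k = p + 1 := by omega
            subst h3
            rw [h1, hdec p le_rfl]
            push_cast; ring
  rcases hpath (n - 1) (by omega) with hinc | hdec
  · -- σ is the identity, trace = ± n
    have hs0 : s 0 = 0 := by
      have hb := hsbound (n - 1) (by omega)
      have h1 := hinc (n - 1) le_rfl
      have hb0 := hsbound 0 (by omega)
      omega
    have hsid : ∀ i : Fin n, σ i = i := by
      intro i
      rcases i with ⟨m, hm⟩
      have h1 := hinc m (by omega)
      rw [hsval m hm, hs0] at h1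
      apply Fin.ext
      show (↑(σ ⟨m, hm⟩) : ℕ) = m
      omega
    have htr2 : A.trace = ∑ i : Fin n, eps i := by
      refine Finset.sum_congr rfl fun i _ => ?_
      have h1 := hdelta i i
      rw [hsid i] at h1
      rw [Matrix.diag_apply, h1, if_pos rfl]
    rw [Finset.sum_congr rfl (fun i _ => hepsconst i), Finset.sum_const,
      Finset.card_univ, Fintype.card_fin, nsmul_eq_mul] at htr2
    rw [htr, eq_comm] at htr2
    have hn2 : (2 : ℤ) ≤ (n : ℤ) := by exact_mod_cast hn
    rcases heps ⟨0, by omega⟩ with h | h <;> rw [h] at htr2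
    · have : (n : ℤ) = -1 := by linarith [htr2]
      omega
    · have : (n : ℤ) = 1 := by nlinarith [htr2]
      omega
  · -- σ is the reversal, contradicting non-palindromicity
    have hs0 : s 0 = (n : ℤ) - 1 := by
      have hb := hsbound (n - 1) (by omega)
      have h1 := hdec (n - 1) le_rfl
      have hb0 := hsbound 0 (by omega)
      have hcast : ((n - 1 : ℕ) : ℤ) = (n : ℤ) - 1 := by omega
      rw [hcast] at h1
      omega
    have hsrev : ∀ i : Fin n, σ i = i.rev := by
      intro i
      rcases i with ⟨m, hm⟩
      have h1 := hdec m (by omega)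
      rw [hsval m hm, hs0] at h1
      apply Fin.ext
      rw [Fin.val_rev]
      show (↑(σ ⟨m, hm⟩) : ℕ) = n - (m + 1)
      omega
    obtain ⟨i0, hi0⟩ := hnonpal
    apply hi0
    rw [← hsrev i0]
    exact (hxs i0).symm
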